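/- The gradients of f at the conjugate-gradient iterates are pairwise orthogonal: for all k and i with i < k, ⟨∇f(y_k), ∇f(y_i)⟩ = 0. -/

import Mathlib

open RealInnerProductSpace Finset

lemma quad_zero (c q : ℝ) (hq : 0 ≤ q) (h : ∀ t : ℝ, 0 ≤ t * c + t ^ 2 / 2 * q) :
    c = 0 := by
  have h1 := h (-c / (q + 1))
  have hq1 : 0 < q + 1 := by linarith
  have hq2 : (0:ℝ) < (q + 1) * (q + 1) := mul_pos hq1 hq1
  have h2 : 0 ≤ (-c / (q + 1) * c + (-c / (q + 1)) ^ 2 / 2 * q) * ((q + 1) * (q + 1)) :=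
    mul_nonneg h1 hq2.le
  have h3 : (-c / (q + 1) * c + (-c / (q + 1)) ^ 2 / 2 * q) * ((q + 1) * (q + 1))
      = -(c ^ 2) * (q + 1) + c ^ 2 / 2 * q := by
    field_simp
  rw [h3] at h2
  nlinarith [sq_nonneg c]

theorem cg_gradients_orthogonal {n : ℕ}
    (T : EuclideanSpace ℝ (Fin n) →ₗ[ℝ] EuclideanSpace ℝ (Fin n))
    (hTsymm : ∀ z w, ⟪T z, w⟫ = ⟪z, T w⟫)
    (L μ : ℝ) (hL : 0 < L) (hμ : 0 ≤ μ)
    (hmin : ∀ z, μ * ‖z‖ ^ 2 ≤ ⟪T z, z⟫)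
    (hmax : ∀ z, ⟪T z, z⟫ ≤ L * ‖z‖ ^ 2)
    (b : EuclideanSpace ℝ (Fin n)) (hb : b ∈ LinearMap.range T)
    (f : EuclideanSpace ℝ (Fin n) → ℝ)
    (hf : ∀ z, f z = 1 / 2 * ⟪T z, z⟫ - ⟪b, z⟫)
    (xstar : EuclideanSpace ℝ (Fin n)) (hstar : ∀ z, f xstar ≤ f z)
    (x0 : EuclideanSpace ℝ (Fin n))
    (K : ℕ → Submodule ℝ (EuclideanSpace ℝ (Fin n)))
    (hK : ∀ k, K k = Submodule.span ℝ ((fun j => (T ^ j) (x0 - xstar)) '' Set.Icc 1 k))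
    (y : ℕ → EuclideanSpace ℝ (Fin n)) (hy0 : y 0 = x0)
    (hy : ∀ k, 1 ≤ k → y k - x0 ∈ K k ∧ ∀ z, z - x0 ∈ K k → f (y k) ≤ f z) :
    ∀ k i : ℕ, i < k → ⟪T (y k) - b, T (y i) - b⟫ = 0 := by
  -- expansion of f along a line
  have hexp : ∀ (x v : EuclideanSpace ℝ (Fin n)) (t : ℝ),
      f (x + t • v) = f x + t * ⟪T x - b, v⟫ + t ^ 2 / 2 * ⟪T v, v⟫ := by
    intro x v t
    have hsym := hTsymm v x
    simp only [hf, map_add, map_smul, inner_add_left, inner_add_right,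
      real_inner_smul_left, real_inner_smul_right, inner_sub_left]
    have : ⟪(T v : EuclideanSpace ℝ (Fin n)), x⟫ = ⟪(T x : EuclideanSpace ℝ (Fin n)), v⟫ := by
      rw [hsym, real_inner_comm]
    rw [this]; ring
  -- first-order optimality
  have key : ∀ (x v : EuclideanSpace ℝ (Fin n)), (∀ t : ℝ, f x ≤ f (x + t • v)) →
      ⟪T x - b, v⟫ = 0 := by
    intro x v h
    apply quad_zero _ _ (le_trans (by positivity) (hmin v))
    intro t
    have := h t
    rw [hexp] at this
    linarith
  -- T xstar = b
  have hstar' : T xstar = b := by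
    have h0 : ⟪T xstar - b, T xstar - b⟫ = 0 := by
      apply key
      intro t; exact hstar _
    exact sub_eq_zero.mp (inner_self_eq_zero.mp h0)
  -- membership: T (y i) - b ∈ K k for i < k
  have hmem : ∀ k i : ℕ, i < k → T (y i) - b ∈ K k := by
    intro k i hik
    have hk1 : 1 ≤ k := Nat.one_le_of_lt (Nat.lt_of_le_of_lt (Nat.zero_le i) hik)
    have hTx0 : T (x0 - xstar) ∈ K k := by
      rw [hK k]
      apply Submodule.subset_span
      exact ⟨1, Set.mem_Icc.mpr ⟨le_refl 1, hk1⟩, by simp [pow_one]⟩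
    have hform : T (y i) - b = T (y i - x0) + T (x0 - xstar) := by
      rw [← hstar', ← map_add, ← map_sub]; congr 1; abel
    rw [hform]
    rcases Nat.eq_zero_or_pos i with hi0 | hi1
    · subst hi0
      rw [hy0, sub_self, map_zero, zero_add]
      exact hTx0
    · have hyi := (hy i hi1).1
      apply Submodule.add_mem _ _ hTx0
      -- T maps K i into K k
      have hmap : (K i).map T ≤ K k := by
        rw [hK i, hK k, Submodule.map_span]
        apply Submodule.span_mono
        rintro _ ⟨_, ⟨j, hj, rfl⟩, rfl⟩
        refine ⟨j + 1, Set.mem_Icc.mpr ⟨Nat.le_add_left 1 j, ?_⟩, ?_⟩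
        · have := (Set.mem_Icc.mp hj).2; omega
        · show (T ^ (j + 1)) (x0 - xstar) = T ((T ^ j) (x0 - xstar))
          rw [pow_succ', Module.End.mul_apply]
      exact hmap ⟨y i - x0, hyi, rfl⟩
  -- conclude
  intro k i hik
  have hk1 : 1 ≤ k := Nat.one_le_of_lt (Nat.lt_of_le_of_lt (Nat.zero_le i) hik)
  apply key
  intro t
  apply (hy k hk1).2
  have : y k + t • (T (y i) - b) - x0 = (y k - x0) + t • (T (y i) - b) := by abel
  rw [this]
  exact Submodule.add_mem _ (hy k hk1).1 (Submodule.smul_mem _ _ (hmem k i hik))
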